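/- Every well-ordering of L can be coded into an accessible configuration of the edged cube Q̄_L: there is an injective map assigning to each well-ordering ≺ of L a configuration f_≺ of Q̄_L accessible from the solved configuration f_solved, with distinct well-orderings receiving distinct configurations. In particular, if |L| = ℵ_α, there is an injection from the ordinal interval [ω_α, ω_{α+1}) into the set of accessible configurations of Q̄_L. -/

import Mathlib

universe u v

namespace InfRubik

/-- The three axes of the cube. -/
inductive Axis : Type
  | x | y | z
  deriving DecidableEq

/-- The six colors of the Rubik's cube.  A *configuration* is a map from cells to
`Option Color`, where `none` plays the role of the non-color `NaC`. -/
inductive Color : Type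
  | red | white | green | orange | yellow | blue
  deriving DecidableEq

/-- The set `L̄† = -L ∪ {0} ∪ L ∪ {±∞}` of extended coordinates. -/
inductive ExtCoord (L : Type u) : Type u
  | neg : L → ExtCoord L
  | zero : ExtCoord L
  | pos : L → ExtCoord L
  | negInf : ExtCoord L
  | posInf : ExtCoord L

namespace ExtCoord

variable {L : Type u}

/-- The reflection `r ↦ -r`. -/
def reflect : ExtCoord L → ExtCoord L
  | .neg r => .pos r
  | .zero => .zero
  | .pos r => .neg r
  | .negInf => .posInf
  | .posInf => .negInf

@[simp] theorem reflect_reflect (a : ExtCoord L) : a.reflect.reflect = a := by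
  cases a <;> rfl

/-- Whether a coordinate is `±∞`. -/
def isInfB : ExtCoord L → Bool
  | .negInf => true
  | .posInf => true
  | _ => false

@[simp] theorem isInfB_reflect (a : ExtCoord L) : a.reflect.isInfB = a.isInfB := by
  cases a <;> rfl

/-- Whether a coordinate is `0`. -/
def isZeroB : ExtCoord L → Bool
  | .zero => true
  | _ => false

@[simp] theorem isZeroB_reflect (a : ExtCoord L) : a.reflect.isZeroB = a.isZeroB := by
  cases a <;> rfl

end ExtCoord

/-- A point of the ambient space `L̄† × L̄† × L̄†`. -/
abbrev Triple (L : Type u) := ExtCoord L × ExtCoord L × ExtCoord L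

/-- The coordinate of a point along an axis. -/
def Triple.coord {L : Type u} : Axis → Triple L → ExtCoord L
  | .x, p => p.1
  | .y, p => p.2.1
  | .z, p => p.2.2

/-- Quarter-turn rotation of the ambient space about an axis (right-hand rule). -/
def rot {L : Type u} : Axis → Triple L → Triple L
  | .x, p => (p.1, p.2.2.reflect, p.2.1)
  | .y, p => (p.2.2, p.2.1, p.1.reflect)
  | .z, p => (p.2.1.reflect, p.1, p.2.2)

/-- Inverse quarter-turn rotation of the ambient space about an axis. -/
def rotInv {L : Type u} : Axis → Triple L → Triple L
  | .x, p => (p.1, p.2.2, p.2.1.reflect)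
  | .y, p => (p.2.2.reflect, p.2.1, p.1)
  | .z, p => (p.2.1, p.1.reflect, p.2.2)

@[simp] theorem rotInv_rot {L : Type u} (i : Axis) (p : Triple L) : rotInv i (rot i p) = p := by
  cases i <;> simp [rot, rotInv]

@[simp] theorem rot_rotInv {L : Type u} (i : Axis) (p : Triple L) : rot i (rotInv i p) = p := by
  cases i <;> simp [rot, rotInv]

/-- The number of infinite coordinates of a point. -/
def infCount {L : Type u} (p : Triple L) : ℕ :=
  (if p.1.isInfB then 1 else 0) + (if p.2.1.isInfB then 1 else 0) +
    (if p.2.2.isInfB then 1 else 0)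

/-- The number of zero coordinates of a point. -/
def zeroCount {L : Type u} (p : Triple L) : ℕ :=
  (if p.1.isZeroB then 1 else 0) + (if p.2.1.isZeroB then 1 else 0) +
    (if p.2.2.isZeroB then 1 else 0)

theorem infCount_rot {L : Type u} (i : Axis) (p : Triple L) : infCount (rot i p) = infCount p := by
  cases i <;> cases h1 : p.1.isInfB <;> cases h2 : p.2.1.isInfB <;> cases h3 : p.2.2.isInfB <;>
    simp [rot, infCount, h1, h2, h3]

theorem infCount_rotInv {L : Type u} (i : Axis) (p : Triple L) :
    infCount (rotInv i p) = infCount p := by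
  cases i <;> cases h1 : p.1.isInfB <;> cases h2 : p.2.1.isInfB <;> cases h3 : p.2.2.isInfB <;>
    simp [rotInv, infCount, h1, h2, h3]

@[simp] theorem coord_rot_self {L : Type u} (i : Axis) (p : Triple L) :
    (rot i p).coord i = p.coord i := by
  cases i <;> rfl

@[simp] theorem coord_rotInv_self {L : Type u} (i : Axis) (p : Triple L) :
    (rotInv i p).coord i = p.coord i := by
  cases i <;> rfl

/-- A cell of the *edgeless* cube `Q_L`: a point of the ambient space with exactly one
infinite coordinate. -/
def Cell (L : Type u) : Type u := {p : Triple L // infCount p = 1}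

open Classical in
/-- The underlying map on points of the quarter-turn twist `T_{i,α}`. -/
noncomputable def qtTriple {L : Type u} (i : Axis) (α : ExtCoord L) (p : Triple L) : Triple L :=
  if p.coord i = α then rot i p else p

open Classical in
/-- The underlying map on points of the inverse quarter-turn twist `T_{i,α}⁻¹`. -/
noncomputable def qtTripleInv {L : Type u} (i : Axis) (α : ExtCoord L) (p : Triple L) : Triple L :=
  if p.coord i = α then rotInv i p else p

theorem qtTripleInv_qtTriple {L : Type u} (i : Axis) (α : ExtCoord L) (p : Triple L) :
    qtTripleInv i α (qtTriple i α p) = p := by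
  classical
  by_cases h : p.coord i = α <;> simp [qtTriple, qtTripleInv, h]

theorem qtTriple_qtTripleInv {L : Type u} (i : Axis) (α : ExtCoord L) (p : Triple L) :
    qtTriple i α (qtTripleInv i α p) = p := by
  classical
  by_cases h : p.coord i = α <;> simp [qtTriple, qtTripleInv, h]

theorem infCount_qtTriple {L : Type u} (i : Axis) (α : ExtCoord L) (p : Triple L) :
    infCount (qtTriple i α p) = infCount p := by
  classical
  by_cases h : p.coord i = α <;> simp [qtTriple, h, infCount_rot]

theorem infCount_qtTripleInv {L : Type u} (i : Axis) (α : ExtCoord L) (p : Triple L) :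
    infCount (qtTripleInv i α p) = infCount p := by
  classical
  by_cases h : p.coord i = α <;> simp [qtTripleInv, h, infCount_rotInv]

/-- The quarter-turn twist `T_{i,α}` of the edgeless cube, as a permutation of cells. -/
noncomputable def quarterTurn {L : Type u} (i : Axis) (α : ExtCoord L) : Equiv.Perm (Cell L) where
  toFun c := ⟨qtTriple i α c.1, by rw [infCount_qtTriple]; exact c.2⟩
  invFun c := ⟨qtTripleInv i α c.1, by rw [infCount_qtTripleInv]; exact c.2⟩
  left_inv c := Subtype.ext (qtTripleInv_qtTriple i α c.1)
  right_inv c := Subtype.ext (qtTriple_qtTripleInv i α c.1)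

/-- The basic twists of the edgeless cube: quarter turns, half turns and reverse
quarter turns of a single layer. -/
def IsBasic (L : Type u) (π : Equiv.Perm (Cell L)) : Prop :=
  ∃ (i : Axis) (α : ExtCoord L),
    π = quarterTurn i α ∨ π = quarterTurn i α ^ 2 ∨ π = (quarterTurn i α)⁻¹

/-! ### The edged cube -/

/-- How a quarter-turn about axis `i` transports the face tag of a cell. -/
def tagMap : Axis → Axis → Axis
  | .x, .x => .x
  | .x, .y => .z
  | .x, .z => .y
  | .y, .x => .z
  | .y, .y => .y
  | .y, .z => .x
  | .z, .x => .y
  | .z, .y => .x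
  | .z, .z => .z

@[simp] theorem tagMap_tagMap (i j : Axis) : tagMap i (tagMap i j) = j := by
  cases i <;> cases j <;> rfl

theorem isInfB_coord_tagMap_rot {L : Type u} (i j : Axis) (p : Triple L) :
    ((rot i p).coord (tagMap i j)).isInfB = (p.coord j).isInfB := by
  cases i <;> cases j <;> simp [rot, Triple.coord, tagMap]

theorem isInfB_coord_tagMap_rotInv {L : Type u} (i j : Axis) (p : Triple L) :
    ((rotInv i p).coord (tagMap i j)).isInfB = (p.coord j).isInfB := by
  cases i <;> cases j <;> simp [rotInv, Triple.coord, tagMap]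

/-- A cell of the *edged* cube `Q̄_L`: a point of the ambient space together with a tag
naming an axis, such that the coordinate along the tagged axis is infinite (the tag
indicates the face to which the cell belongs). -/
def ECell (L : Type u) : Type u := {q : Triple L × Axis // (q.1.coord q.2).isInfB = true}

open Classical in
/-- The underlying map of the quarter-turn twist `T_{i,α}` of the edged cube. -/
noncomputable def eqtFun {L : Type u} (i : Axis) (α : ExtCoord L) (q : Triple L × Axis) :
    Triple L × Axis :=
  if q.1.coord i = α then (rot i q.1, tagMap i q.2) else q

open Classical in
/-- The underlying map of the reverse quarter-turn twist of the edged cube. -/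
noncomputable def eqtFunInv {L : Type u} (i : Axis) (α : ExtCoord L) (q : Triple L × Axis) :
    Triple L × Axis :=
  if q.1.coord i = α then (rotInv i q.1, tagMap i q.2) else q

theorem eqtFunInv_eqtFun {L : Type u} (i : Axis) (α : ExtCoord L) (q : Triple L × Axis) :
    eqtFunInv i α (eqtFun i α q) = q := by
  classical
  by_cases h : q.1.coord i = α <;> simp [eqtFun, eqtFunInv, h]

theorem eqtFun_eqtFunInv {L : Type u} (i : Axis) (α : ExtCoord L) (q : Triple L × Axis) :
    eqtFun i α (eqtFunInv i α q) = q := by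
  classical
  by_cases h : q.1.coord i = α <;> simp [eqtFun, eqtFunInv, h]

theorem isInfB_eqtFun {L : Type u} (i : Axis) (α : ExtCoord L) (q : Triple L × Axis) :
    (((eqtFun i α q).1.coord (eqtFun i α q).2)).isInfB = ((q.1.coord q.2)).isInfB := by
  classical
  by_cases h : q.1.coord i = α <;> simp [eqtFun, h, isInfB_coord_tagMap_rot]

theorem isInfB_eqtFunInv {L : Type u} (i : Axis) (α : ExtCoord L) (q : Triple L × Axis) :
    (((eqtFunInv i α q).1.coord (eqtFunInv i α q).2)).isInfB = ((q.1.coord q.2)).isInfB := by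
  classical
  by_cases h : q.1.coord i = α <;> simp [eqtFunInv, h, isInfB_coord_tagMap_rotInv]

/-- The quarter-turn twist `T_{i,α}` of the edged cube, as a permutation of cells.  A face
twist moves, besides the cells of its face, also the coupled edge and corner cells of the
adjacent faces lying in the twisted layer. -/
noncomputable def equarterTurn {L : Type u} (i : Axis) (α : ExtCoord L) :
    Equiv.Perm (ECell L) where
  toFun c := ⟨eqtFun i α c.1, by rw [isInfB_eqtFun]; exact c.2⟩
  invFun c := ⟨eqtFunInv i α c.1, by rw [isInfB_eqtFunInv]; exact c.2⟩
  left_inv c := Subtype.ext (eqtFunInv_eqtFun i α c.1)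
  right_inv c := Subtype.ext (eqtFun_eqtFunInv i α c.1)

/-- The basic twists of the edged cube. -/
def IsEBasic (L : Type u) (π : Equiv.Perm (ECell L)) : Prop :=
  ∃ (i : Axis) (α : ExtCoord L),
    π = equarterTurn i α ∨ π = equarterTurn i α ^ 2 ∨ π = (equarterTurn i α)⁻¹

/-! ### Transfinite sequences of twists and their action on labellings -/

open Classical in
/-- The eventual value of an ordinal-indexed family of `Option`-values: `some v` if the family
stabilizes on `some v` before `lam`, and `none` otherwise. -/
noncomputable def eventualVal {X : Type u} (lam : Ordinal.{v})
    (g : ∀ η, η < lam → Option X) : Option X :=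
  if h : ∃ v : X, ∃ γ, γ < lam ∧ ∀ η (hη : η < lam), γ ≤ η → g η hη = some v
  then some h.choose else none

/-- Applying an ordinal-indexed sequence of permutations to an initial labelling:
`run σ f0 θ` is the labelling obtained after the first `θ` moves, with
`f_{η+1}(c) = f_η(σ_η⁻¹ c)` at successors and the eventual value (or `NaC = none`)
at limits. -/
noncomputable def run {Cl : Type v} {X : Type u} (σ : Ordinal.{v} → Equiv.Perm Cl)
    (f0 : Cl → Option X) (θ : Ordinal.{v}) : Cl → Option X :=
  Ordinal.limitRecOn (motive := fun _ => Cl → Option X) θ f0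
    (fun η fη c => fη ((σ η)⁻¹ c))
    (fun lam _ prev c => eventualVal lam (fun η h => prev η h c))

/-- A (transfinite) sequence of twists of length `len`, each of which satisfies the
predicate `B` (being a basic twist). -/
structure TwistSeq (Cl : Type v) (B : Equiv.Perm Cl → Prop) : Type (v + 1) where
  len : Ordinal.{v}
  seq : Ordinal.{v} → Equiv.Perm Cl
  basic : ∀ η, η < len → B (seq η)

namespace TwistSeq

variable {Cl : Type v} {B : Equiv.Perm Cl → Prop}

/-- The terminal labelling obtained by applying a sequence of twists to `f0`. -/
noncomputable def terminal (s : TwistSeq Cl B) {X : Type u} (f0 : Cl → Option X) :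
    Cl → Option X :=
  run s.seq f0 s.len

/-- A sequence of twists is convergent over `f0` if the terminal labelling is legal,
i.e. never takes the value `NaC = none`. -/
def ConvOver (s : TwistSeq Cl B) {X : Type u} (f0 : Cl → Option X) : Prop :=
  ∀ c, s.terminal f0 c ≠ none

/-- A sequence of twists is universally convergent if it is convergent over the identity
labelling. -/
def UnivConv (s : TwistSeq Cl B) : Prop := s.ConvOver (fun c => some c)

/-- A sequence is twist-finite if each twist occurs in it only finitely many times. -/
def TwistFinite (s : TwistSeq Cl B) : Prop :=
  ∀ π : Equiv.Perm Cl, {η : Ordinal | η < s.len ∧ s.seq η = π}.Finite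

/-- Two sequences are equivalent, `σ⃗ ∼ τ⃗`, when they produce the same terminal
configuration over every initial configuration. -/
def Sim (s t : TwistSeq Cl B) : Prop :=
  ∀ f : Cl → Option Color, s.terminal f = t.terminal f

/-- Concatenation of twist sequences: `s.concat t` performs `s` and then `t`. -/
noncomputable def concat (s t : TwistSeq Cl B) : TwistSeq Cl B where
  len := s.len + t.len
  seq := fun η => if η < s.len then s.seq η else t.seq (η - s.len)
  basic := by
    intro η hη
    by_cases h : η < s.len
    · simpa [h] using s.basic η h
    · have hc : 0 < t.len := by
        rcases eq_zero_or_pos t.len with h0 | h0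
        · rw [h0, add_zero] at hη; exact absurd hη h
        · exact h0
      have h2 : η - s.len < t.len := Ordinal.sub_lt_of_lt_add hη hc
      simpa [h] using t.basic _ h2

/-- The empty sequence of twists. -/
def empty (Cl : Type v) (B : Equiv.Perm Cl → Prop) : TwistSeq Cl B where
  len := 0
  seq := fun _ => 1
  basic := fun η hη => absurd hη (by simp)

/-- `n`-fold self-concatenation of a sequence of twists. -/
noncomputable def npow (s : TwistSeq Cl B) : ℕ → TwistSeq Cl B
  | 0 => empty Cl B
  | n + 1 => (npow s n).concat s

end TwistSeq

/-- Basic sequences of twists of the edgeless cube `Q_L`. -/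
abbrev BasicSeq (L : Type u) := TwistSeq (Cell L) (IsBasic L)

/-- Basic sequences of twists of the edged cube `Q̄_L`. -/
abbrev EBasicSeq (L : Type u) := TwistSeq (ECell L) (IsEBasic L)

/-- `f` is accessible from `f0` when some basic sequence applied to `f0` is convergent with
terminal configuration `f`. -/
def Accessible {Cl : Type v} (B : Equiv.Perm Cl → Prop) (f0 f : Cl → Option Color) : Prop :=
  ∃ s : TwistSeq Cl B, s.ConvOver f0 ∧ s.terminal f0 = f

/-- A labelling is legal if it never takes the value `NaC = none`. -/
def IsLegal {Cl : Type v} {X : Type u} (f : Cl → Option X) : Prop := ∀ c, f c ≠ none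

/-! ### Clusters, faces, and distinguished configurations -/

/-- The group of permutations of cells of the edgeless cube generated by the basic twists. -/
def twistGroup (L : Type u) : Subgroup (Equiv.Perm (Cell L)) :=
  Subgroup.closure {π | IsBasic L π}

/-- The cluster of a cell of the edgeless cube: its orbit under the group generated by the
basic twists. -/
def cluster {L : Type u} (c : Cell L) : Set (Cell L) :=
  {d | ∃ g ∈ twistGroup L, g c = d}

/-- The group of permutations of cells of the edged cube generated by the basic twists. -/
def etwistGroup (L : Type u) : Subgroup (Equiv.Perm (ECell L)) :=
  Subgroup.closure {π | IsEBasic L π}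

/-- The cluster of a cell of the edged cube. -/
def ecluster {L : Type u} (c : ECell L) : Set (ECell L) :=
  {d | ∃ g ∈ etwistGroup L, g c = d}

open Classical in
/-- The solved configuration of the edgeless cube: each face gets one of six distinct
colors. -/
noncomputable def fSolved (L : Type u) : Cell L → Option Color := fun c =>
  if c.1.1 = ExtCoord.posInf then some .red
  else if c.1.1 = ExtCoord.negInf then some .orange
  else if c.1.2.1 = ExtCoord.posInf then some .blue
  else if c.1.2.1 = ExtCoord.negInf then some .green
  else if c.1.2.2 = ExtCoord.posInf then some .white
  else some .yellow

/-- The color of each face: the face is named by the axis and the sign (`true` = `+∞`). -/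
def faceColor : Axis → Bool → Color
  | .x, true => .red
  | .x, false => .orange
  | .y, true => .blue
  | .y, false => .green
  | .z, true => .white
  | .z, false => .yellow

open Classical in
/-- The solved configuration of the edged cube. -/
noncomputable def efSolved (L : Type u) : ECell L → Option Color := fun c =>
  if c.1.1.coord c.1.2 = ExtCoord.posInf then some (faceColor c.1.2 true)
  else some (faceColor c.1.2 false)

/-- A center cell of the edgeless cube: two of its coordinates are `0`. -/
def IsCenter {L : Type u} (c : Cell L) : Prop := zeroCount c.1 = 2

/-- The global rotation of the whole cube about an axis, as a permutation of the cells of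
the edgeless cube. -/
def rotAllPerm {L : Type u} (i : Axis) : Equiv.Perm (Cell L) where
  toFun c := ⟨rot i c.1, by rw [infCount_rot]; exact c.2⟩
  invFun c := ⟨rotInv i c.1, by rw [infCount_rotInv]; exact c.2⟩
  left_inv c := Subtype.ext (rotInv_rot i c.1)
  right_inv c := Subtype.ext (rot_rotInv i c.1)

/-- The group of global rotations of the edgeless cube. -/
def rotGroup (L : Type u) : Subgroup (Equiv.Perm (Cell L)) :=
  Subgroup.closure (Set.range (rotAllPerm (L := L)))

/-- A configuration of the edgeless cube is standard if every non-center cluster contains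
exactly four cells of each of the six colors, and its restriction to the center cluster is
obtained from the solved configuration by a global rotation of the cube. -/
def Standard {L : Type u} (f : Cell L → Option Color) : Prop :=
  (∀ c : Cell L, ¬IsCenter c → ∀ γ : Color, {d ∈ cluster c | f d = some γ}.ncard = 4) ∧
  ∃ g ∈ rotGroup L, ∀ d : Cell L, IsCenter d → f d = fSolved L (g⁻¹ d)

/-- A configuration is invariant under all quarter-turn face twists. -/
def FaceInvariant {L : Type u} (f : Cell L → Option Color) : Prop :=
  ∀ (i : Axis) (α : ExtCoord L), α.isInfB = true →
    ∀ c : Cell L, f ((quarterTurn i α)⁻¹ c) = f c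

/-! ### Quadrants and cluster configurations -/

/-- The upper-right quadrant `D` of the Front face: the cells `(x, y, +∞)` with `x ∈ L`
and `y ∈ {0} ∪ L`; every non-center cluster has a unique representative in `D`. -/
def Dset (L : Type u) : Set (Cell L) :=
  {c | ∃ (a : L) (b : ExtCoord L), (b = ExtCoord.zero ∨ ∃ r : L, b = ExtCoord.pos r) ∧
    c.1 = (ExtCoord.pos a, b, ExtCoord.posInf)}

/-- Two cells lie in the same face quadrant (an image of `D` under a global rotation). -/
def SameQuadrant {L : Type u} (d d' : Cell L) : Prop :=
  ∃ g ∈ rotGroup L, d ∈ (fun c => g c) '' Dset L ∧ d' ∈ (fun c => g c) '' Dset L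

/-! ### Coupled cells of the edged cube -/

/-- Two cells of the edged cube are coupled if they occupy the same location but belong to
different faces (they are parts of a common edge or corner cubie). -/
def Coupled {L : Type u} (c c' : ECell L) : Prop := c.1.1 = c'.1.1 ∧ c.1.2 ≠ c'.1.2

/-- An edge cell: exactly two infinite coordinates. -/
def IsEdgeCell {L : Type u} (c : ECell L) : Prop := infCount c.1.1 = 2

/-- A corner cell: three infinite coordinates. -/
def IsCornerCell {L : Type u} (c : ECell L) : Prop := infCount c.1.1 = 3

/-- An edge-cross cell: an edge cell one of whose coordinates is `0`. -/
def IsEdgeCross {L : Type u} (c : ECell L) : Prop :=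
  IsEdgeCell c ∧ 0 < zeroCount c.1.1

/-! ### Auxiliary material for the coding theorem -/

section Coding

open Ordinal

variable {L : Type u}

theorem eventualVal_eq_of {X : Type*} {lam : Ordinal.{v}} {g : ∀ η, η < lam → Option X}
    {v : X} {γ : Ordinal.{v}} (hγ : γ < lam)
    (h : ∀ η (hη : η < lam), γ ≤ η → g η hη = some v) :
    eventualVal lam g = some v := by
  classical
  have hex : ∃ v' : X, ∃ γ', γ' < lam ∧ ∀ η (hη : η < lam), γ' ≤ η → g η hη = some v' :=
    ⟨v, γ, hγ, h⟩
  rw [eventualVal, dif_pos hex]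
  obtain ⟨γ', hγ', h'⟩ := hex.choose_spec
  have hm : max γ γ' < lam := max_lt hγ hγ'
  have h1 := h' (max γ γ') hm (le_max_right _ _)
  rw [h (max γ γ') hm (le_max_left _ _)] at h1
  exact h1.symm

theorem run_zero {Cl : Type v} {X : Type*} (σ : Ordinal.{v} → Equiv.Perm Cl)
    (f0 : Cl → Option X) : run σ f0 0 = f0 :=
  Ordinal.limitRecOn_zero _ _ _

theorem run_succ {Cl : Type v} {X : Type*} (σ : Ordinal.{v} → Equiv.Perm Cl)
    (f0 : Cl → Option X) (η : Ordinal.{v}) :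
    run σ f0 (Order.succ η) = fun c => run σ f0 η ((σ η)⁻¹ c) :=
  Ordinal.limitRecOn_succ _ _ _ _

theorem run_limit {Cl : Type v} {X : Type*} (σ : Ordinal.{v} → Equiv.Perm Cl)
    (f0 : Cl → Option X) {lam : Ordinal.{v}} (h : Order.IsSuccLimit lam) :
    run σ f0 lam = fun c => eventualVal lam (fun η _ => run σ f0 η c) :=
  Ordinal.limitRecOn_limit _ _ _ _ h

theorem equarterTurn_inv_apply (i : Axis) (α : ExtCoord L) (c : ECell L) :
    ((equarterTurn i α)⁻¹ c : ECell L) =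
      ⟨eqtFunInv i α c.1, by rw [isInfB_eqtFunInv]; exact c.2⟩ := rfl

theorem coord_fst_eqtFunInv (i : Axis) (α : ExtCoord L) (q : Triple L × Axis) :
    (eqtFunInv i α q).1.coord i = q.1.coord i := by
  classical
  unfold eqtFunInv
  split
  · exact coord_rotInv_self i q.1
  · rfl

theorem eqtFunInv_of_ne {i : Axis} {α : ExtCoord L} {q : Triple L × Axis}
    (h : q.1.coord i ≠ α) : eqtFunInv i α q = q := by
  classical
  unfold eqtFunInv
  rw [if_neg h]

theorem equarterTurn_inv_apply_of_ne {i : Axis} {α : ExtCoord L} {c : ECell L}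
    (h : c.1.1.coord i ≠ α) : (equarterTurn i α)⁻¹ c = c := by
  rw [equarterTurn_inv_apply]
  exact Subtype.ext (eqtFunInv_of_ne h)

theorem coord_equarterTurn_inv (i : Axis) (α : ExtCoord L) (c : ECell L) :
    (((equarterTurn i α)⁻¹ c : ECell L)).1.1.coord i = c.1.1.coord i := by
  rw [equarterTurn_inv_apply]
  exact coord_fst_eqtFunInv i α c.1

open Classical in
/-- An enumeration of `L` along the well-ordering `WellOrderingRel`. -/
noncomputable def enumL (L : Type u) [Infinite L] (η : Ordinal.{u}) : L :=
  if h : ∃ a : L, typein (WellOrderingRel (α := L)) a = η then h.choose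
  else Classical.arbitrary L

theorem typein_enumL (L : Type u) [Infinite L] {η : Ordinal.{u}}
    (hη : η < Ordinal.type (WellOrderingRel (α := L))) :
    typein (WellOrderingRel (α := L)) (enumL L η) = η := by
  classical
  have h : ∃ a : L, typein (WellOrderingRel (α := L)) a = η := typein_surj _ hη
  rw [enumL, dif_pos h]
  exact h.choose_spec

/-- The basic sequence coding an injective layer-selection `β` : twist layer `β a` about the
`x`-axis once for each `a : L`, in the order given by `WellOrderingRel`. -/
noncomputable def codeSeq (L : Type u) [Infinite L] (β : L → ExtCoord L) : EBasicSeq L where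
  len := Ordinal.type (WellOrderingRel (α := L))
  seq := fun η => equarterTurn Axis.x (β (enumL L η))
  basic := fun η _ => ⟨Axis.x, β (enumL L η), Or.inl rfl⟩

theorem codeSeq_seq (L : Type u) [Infinite L] (β : L → ExtCoord L) (η : Ordinal.{u}) :
    (codeSeq L β).seq η = equarterTurn Axis.x (β (enumL L η)) := rfl

theorem codeSeq_len (L : Type u) [Infinite L] (β : L → ExtCoord L) :
    (codeSeq L β).len = Ordinal.type (WellOrderingRel (α := L)) := rfl

open Classical in
theorem run_codeSeq (L : Type u) [Infinite L] (β : L → ExtCoord L)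
    (hβ : Function.Injective β) (f0 : ECell L → Option Color) (hf0 : ∀ c, f0 c ≠ none) :
    ∀ θ : Ordinal.{u}, θ ≤ Ordinal.type (WellOrderingRel (α := L)) → ∀ c : ECell L,
      run (codeSeq L β).seq f0 θ c =
        if ∃ a : L, typein (WellOrderingRel (α := L)) a < θ ∧ c.1.1.coord Axis.x = β a
        then f0 ((equarterTurn Axis.x (c.1.1.coord Axis.x))⁻¹ c)
        else f0 c := by
  intro θ
  induction θ using Ordinal.limitRecOn with
  | zero =>
    intro _ c
    rw [run_zero, if_neg]
    rintro ⟨a, ha, -⟩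
    exact not_lt_zero ha
  | add_one η IH =>
    intro hθ c
    rw [Ordinal.add_one_eq_succ] at hθ ⊢
    have hη : η < Ordinal.type (WellOrderingRel (α := L)) := Order.succ_le_iff.mp hθ
    have hte : typein (WellOrderingRel (α := L)) (enumL L η) = η := typein_enumL L hη
    rw [congrFun (run_succ (codeSeq L β).seq f0 η) c, codeSeq_seq]
    by_cases hc : c.1.1.coord Axis.x = β (enumL L η)
    · have hcoord :
          (((equarterTurn Axis.x (β (enumL L η)))⁻¹ c : ECell L)).1.1.coord Axis.x
            = c.1.1.coord Axis.x := coord_equarterTurn_inv _ _ c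
      rw [IH (le_of_lt hη) _, if_neg, if_pos ⟨enumL L η, by rw [hte]; exact Order.lt_succ η, hc⟩]
      · rw [hc]
      · rintro ⟨a, ha, hxa⟩
        rw [hcoord, hc] at hxa
        have : enumL L η = a := hβ hxa
        rw [← this, hte] at ha
        exact lt_irrefl η ha
    · rw [equarterTurn_inv_apply_of_ne hc, IH (le_of_lt hη) c]
      refine (if_congr ?_ rfl rfl).symm
      constructor
      · rintro ⟨a, ha, hxa⟩
        refine ⟨a, ?_, hxa⟩
        rcases lt_or_eq_of_le (Order.lt_succ_iff.mp ha) with h' | h'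
        · exact h'
        · exfalso
          rw [← hte] at h'
          have := typein_injective (WellOrderingRel (α := L)) h'
          rw [this] at hxa
          exact hc hxa
      · rintro ⟨a, ha, hxa⟩
        exact ⟨a, lt_trans ha (Order.lt_succ η), hxa⟩
  | limit lam hlam IH =>
    intro hθ c
    rw [congrFun (run_limit (codeSeq L β).seq f0 hlam) c]
    by_cases hcond :
        ∃ a : L, typein (WellOrderingRel (α := L)) a < lam ∧ c.1.1.coord Axis.x = β a
    · obtain ⟨a, ha, hxa⟩ := hcond
      obtain ⟨v, hv⟩ := Option.ne_none_iff_exists'.mp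
        (hf0 ((equarterTurn Axis.x (c.1.1.coord Axis.x))⁻¹ c))
      rw [if_pos ⟨a, ha, hxa⟩, hv]
      refine eventualVal_eq_of (hlam.succ_lt ha) ?_
      intro η hη hge
      rw [IH η hη (le_of_lt (lt_of_lt_of_le hη hθ)) c,
        if_pos ⟨a, Order.succ_le_iff.mp hge, hxa⟩, hv]
    · obtain ⟨v, hv⟩ := Option.ne_none_iff_exists'.mp (hf0 c)
      rw [if_neg hcond, hv]
      refine eventualVal_eq_of (γ := 0) hlam.pos ?_
      intro η hη _
      rw [IH η hη (le_of_lt (lt_of_lt_of_le hη hθ)) c, if_neg, hv]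
      rintro ⟨a, ha, hxa⟩
      exact hcond ⟨a, lt_trans ha hη, hxa⟩

open Classical in
theorem terminal_codeSeq (L : Type u) [Infinite L] (β : L → ExtCoord L)
    (hβ : Function.Injective β) (f0 : ECell L → Option Color) (hf0 : ∀ c, f0 c ≠ none)
    (c : ECell L) :
    (codeSeq L β).terminal f0 c =
      if ∃ a : L, c.1.1.coord Axis.x = β a
      then f0 ((equarterTurn Axis.x (c.1.1.coord Axis.x))⁻¹ c)
      else f0 c := by
  have h := run_codeSeq L β hβ f0 hf0 (Ordinal.type (WellOrderingRel (α := L))) le_rfl c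
  refine Eq.trans h ?_
  refine if_congr ?_ rfl rfl
  exact ⟨fun ⟨a, _, h2⟩ => ⟨a, h2⟩, fun ⟨a, h2⟩ => ⟨a, typein_lt_type _ a, h2⟩⟩

theorem convOver_codeSeq (L : Type u) [Infinite L] (β : L → ExtCoord L)
    (hβ : Function.Injective β) (f0 : ECell L → Option Color) (hf0 : ∀ c, f0 c ≠ none) :
    (codeSeq L β).ConvOver f0 := by
  intro c
  rw [terminal_codeSeq L β hβ f0 hf0 c]
  split <;> apply hf0

theorem efSolved_ne_none (L : Type u) (c : ECell L) : efSolved L c ≠ none := by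
  rw [efSolved]
  split <;> simp

open Classical in
/-- The layer selection coding a set `S ⊆ L`: layer `+a` when `a ∈ S`, layer `-a`
otherwise. -/
noncomputable def betaS (S : Set L) : L → ExtCoord L := fun a =>
  if a ∈ S then ExtCoord.pos a else ExtCoord.neg a

theorem betaS_injective (S : Set L) : Function.Injective (betaS S) := by
  classical
  intro a b hab
  by_cases ha : a ∈ S <;> by_cases hb : b ∈ S <;> simp_all [betaS]

/-- The configuration coding a set `S ⊆ L`. -/
noncomputable def codeConf [Infinite L] (S : Set L) : ECell L → Option Color :=
  (codeSeq L (betaS S)).terminal (efSolved L)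

theorem codeConf_accessible [Infinite L] (S : Set L) :
    Accessible (IsEBasic L) (efSolved L) (codeConf S) :=
  ⟨codeSeq L (betaS S),
    convOver_codeSeq L (betaS S) (betaS_injective S) (efSolved L) (efSolved_ne_none L), rfl⟩

/-- The test cell detecting whether `r ∈ S` in the configuration `codeConf S`. -/
def testCell (r : L) : ECell L :=
  ⟨((ExtCoord.pos r, ExtCoord.posInf, ExtCoord.zero), Axis.y), rfl⟩

theorem codeConf_testCell_mem [Infinite L] {S : Set L} {r : L} (hr : r ∈ S) :
    codeConf S (testCell r) = some Color.yellow := by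
  classical
  rw [codeConf, terminal_codeSeq L _ (betaS_injective S) _ (efSolved_ne_none L)]
  rw [if_pos ⟨r, by simp [testCell, Triple.coord, betaS, hr]⟩]
  have hx : (testCell r : ECell L).1.1.coord Axis.x = ExtCoord.pos r := rfl
  rw [hx, equarterTurn_inv_apply]
  simp [eqtFunInv, testCell, Triple.coord, rotInv, tagMap, efSolved, ExtCoord.reflect,
    faceColor]

theorem codeConf_testCell_not_mem [Infinite L] {S : Set L} {r : L} (hr : r ∉ S) :
    codeConf S (testCell r) = some Color.blue := by
  classical
  rw [codeConf, terminal_codeSeq L _ (betaS_injective S) _ (efSolved_ne_none L)]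
  rw [if_neg]
  · simp [testCell, Triple.coord, efSolved, faceColor]
  · rintro ⟨a, ha⟩
    by_cases haS : a ∈ S
    · simp only [testCell, betaS, haS, if_pos, Triple.coord] at ha
      rw [ExtCoord.pos.injEq] at ha
      exact hr (ha ▸ haS)
    · simp [testCell, betaS, haS, Triple.coord] at ha

theorem codeConf_injective (L : Type u) [Infinite L] :
    Function.Injective (codeConf (L := L)) := by
  intro S T h
  have key : ∀ U : Set L, ∀ r : L, r ∈ U ↔ codeConf U (testCell r) = some Color.yellow := by
    intro U r
    by_cases hU : r ∈ U
    · simp [hU, codeConf_testCell_mem hU]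
    · rw [codeConf_testCell_not_mem hU]
      simp [hU]
  ext r
  rw [key S r, key T r, h]

end Coding

end InfRubik
open InfRubik in
/-- Every well-ordering of `L` can be coded into an accessible configuration of the edged
cube `Q̄_L`, injectively; in particular, if `|L| = ℵ_α`, there is an injection from the
ordinal interval `[ω_α, ω_{α+1})` into the accessible configurations of `Q̄_L`. -/
theorem coding_well_orders {L : Type u} [Infinite L] (α : Ordinal.{u})
    (hL : Cardinal.mk L = Cardinal.aleph α) :
    (∃ F : {r : L → L → Prop // IsWellOrder L r} → (ECell L → Option Color),
      Function.Injective F ∧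
      ∀ r, Accessible (IsEBasic L) (efSolved L) (F r)) ∧
    (∃ G : Set.Ico (Cardinal.aleph α).ord (Cardinal.aleph (α + 1)).ord →
        (ECell L → Option Color),
      Function.Injective G ∧
      ∀ o, Accessible (IsEBasic L) (efSolved L) (G o)) := by
  classical
  constructor
  · -- coding well-orders
    have e1 : Cardinal.mk (L → L → Prop) = 2 ^ Cardinal.mk L := by
      calc Cardinal.mk (L → L → Prop)
          = Cardinal.mk (Set (L × L)) := Cardinal.mk_congr (Equiv.curry L L Prop).symm
        _ = 2 ^ Cardinal.mk (L × L) := Cardinal.mk_set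
        _ = 2 ^ (Cardinal.mk L * Cardinal.mk L) := by
            simp [Cardinal.mk_prod]
        _ = 2 ^ Cardinal.mk L := by
            rw [Cardinal.mul_eq_self (Cardinal.aleph0_le_mk L)]
    have h1 : Cardinal.mk {r : L → L → Prop // IsWellOrder L r} ≤ Cardinal.mk (Set L) := by
      refine le_trans (Cardinal.mk_subtype_le _) (le_of_eq ?_)
      rw [e1, Cardinal.mk_set]
    obtain ⟨e⟩ := (Cardinal.le_def _ _).mp h1
    refine ⟨fun r => codeConf (e r), ?_, ?_⟩
    · exact (codeConf_injective L).comp e.injective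
    · intro r
      exact codeConf_accessible (e r)
  · -- coding the ordinal interval
    have h2 : Cardinal.mk (Cardinal.aleph (α + 1)).ord.ToType ≤ Cardinal.mk (Set L) := by
      rw [Cardinal.mk_toType, Cardinal.mk_set, hL, Cardinal.card_ord]
      calc Cardinal.aleph (α + 1) = Order.succ (Cardinal.aleph α) := by
            rw [Ordinal.add_one_eq_succ]
            exact Cardinal.aleph_succ α
        _ ≤ 2 ^ Cardinal.aleph α := Order.succ_le_of_lt (Cardinal.cantor _)
    obtain ⟨e3⟩ := (Cardinal.le_def _ _).mp h2
    have hsub : Set.Ico (Cardinal.aleph α).ord (Cardinal.aleph (α + 1)).ord ⊆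
        Set.Iio (Cardinal.aleph (α + 1)).ord := Set.Ico_subset_Iio_self
    let e0 := Set.embeddingOfSubset _ _ hsub
    let e4 := (Ordinal.ToType.mk (o := (Cardinal.aleph (α + 1)).ord)).toEquiv
    refine ⟨fun o => codeConf (e3 (e4 (e0 o))), ?_, ?_⟩
    · intro o o' ho
      have := (codeConf_injective L) ho
      have := e3.injective this
      have := e4.injective this
      exact e0.injective this
    · intro o
      exact codeConf_accessible _
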